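/- arXiv:1908.06161 — 2 statements merged into one kernel-verified Lean document; each statement's English description precedes it below -/
import Mathlib

section
/- For every k ≥ 2, there exists a set A of k positive integers such that gcd(a, b) = |a - b| for all distinct a, b in A. -/
/-- For every k ≥ 2 there exists a set A of k positive integers such that
gcd(a, b) = |a - b| for all distinct a, b ∈ A. -/
theorem exists_gcd_diff_set (k : ℕ) (hk : 2 ≤ k) :
    ∃ A : Finset ℕ, A.card = k ∧ (∀ a ∈ A, 0 < a) ∧
      ∀ a ∈ A, ∀ b ∈ A, a ≠ b → Nat.gcd a b = ((a : ℤ) - (b : ℤ)).natAbs := by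
  induction k, hk using Nat.le_induction with
  | base => exact ⟨{1, 2}, by decide, by decide, by decide⟩
  | succ k hk ih =>
    obtain ⟨A, hcard, hpos, hgcd⟩ := ih
    set L := A.lcm id with hLdef
    have hdvdL : ∀ a ∈ A, a ∣ L := fun a ha => Finset.dvd_lcm ha
    have hLpos : 0 < L := by
      rcases Nat.eq_zero_or_pos L with h0 | h
      · exfalso
        have := Finset.lcm_eq_zero_iff.mp h0
        simp only [Set.mem_image, Finset.mem_coe, id] at this
        obtain ⟨b, hb, hb0⟩ := this
        have := hpos b hb; omega
      · exact h
    have key : ∀ a ∈ A, Nat.gcd L (L + a) = a := by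
      intro a ha
      apply Nat.dvd_antisymm
      · have h1 : Nat.gcd L (L + a) ∣ L := Nat.gcd_dvd_left _ _
        have h2 : Nat.gcd L (L + a) ∣ L + a := Nat.gcd_dvd_right _ _
        simpa using Nat.dvd_sub h2 h1
      · exact Nat.dvd_gcd (hdvdL a ha) (dvd_add (hdvdL a ha) dvd_rfl)
    have key2 : ∀ a ∈ A, ∀ b ∈ A, a ≠ b →
        Nat.gcd (L + a) (L + b) = ((a : ℤ) - (b : ℤ)).natAbs := by
      intro a ha b hb hab
      have hg := hgcd a ha b hb hab
      apply Nat.dvd_antisymm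
      · set d := Nat.gcd (L + a) (L + b) with hd
        have h1 : (d : ℤ) ∣ ((L + a : ℕ) : ℤ) := Int.natCast_dvd_natCast.mpr (Nat.gcd_dvd_left _ _)
        have h2 : (d : ℤ) ∣ ((L + b : ℕ) : ℤ) := Int.natCast_dvd_natCast.mpr (Nat.gcd_dvd_right _ _)
        have h3 : (d : ℤ) ∣ (a : ℤ) - (b : ℤ) := by
          have := dvd_sub h1 h2
          push_cast at this ⊢
          convert this using 1
          · rfl
          · ring
        rw [← Int.natAbs_natCast d]
        exact Int.natAbs_dvd_natAbs.mpr h3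
      · rw [← hg]
        have hga : Nat.gcd a b ∣ a := Nat.gcd_dvd_left _ _
        have hgb : Nat.gcd a b ∣ b := Nat.gcd_dvd_right _ _
        have hgL : Nat.gcd a b ∣ L := hga.trans (hdvdL a ha)
        exact Nat.dvd_gcd (dvd_add hgL hga) (dvd_add hgL hgb)
    refine ⟨insert L (A.image (L + ·)), ?_, ?_, ?_⟩
    · rw [Finset.card_insert_of_notMem, Finset.card_image_of_injective _ (add_right_injective L), hcard]
      intro h
      obtain ⟨a, ha, h⟩ := Finset.mem_image.mp h
      have := hpos a ha
      omega
    · intro x hx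
      rcases Finset.mem_insert.mp hx with h | h
      · omega
      · obtain ⟨a, ha, rfl⟩ := Finset.mem_image.mp h
        have := hpos a ha; omega
    · intro x hx y hy hxy
      rcases Finset.mem_insert.mp hx with rfl | hx' <;>
        rcases Finset.mem_insert.mp hy with h | hy'
      · exact absurd h.symm hxy
      · obtain ⟨a, ha, rfl⟩ := Finset.mem_image.mp hy'
        have := hpos a ha
        rw [key a ha]
        push_cast
        omega
      · obtain ⟨a, ha, rfl⟩ := Finset.mem_image.mp hx'
        subst h
        have := hpos a ha
        rw [Nat.gcd_comm, key a ha]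
        push_cast
        omega
      · obtain ⟨a, ha, rfl⟩ := Finset.mem_image.mp hx'
        obtain ⟨b, hb, rfl⟩ := Finset.mem_image.mp hy'
        have hab : a ≠ b := by intro h; exact hxy (by rw [h])
        rw [key2 a ha b hb hab]
        push_cast
        omega
end

section
/- There is no infinite set of primes any two of which form a symmetric pair; equivalently, any set S of odd primes in which every two distinct elements form a symmetric pair is finite. -/
/-- Any set of odd primes in which every two distinct elements form a
symmetric pair is finite. -/
theorem symmetric_clique_finite (S : Set ℕ)
    (hprime : ∀ p ∈ S, p.Prime ∧ Odd p)
    (hsym : ∀ p ∈ S, ∀ q ∈ S, p ≠ q →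
      Nat.gcd (p - 1) (q - 1) = ((p : ℤ) - (q : ℤ)).natAbs) :
    S.Finite := by
  rcases S.eq_empty_or_nonempty with h | ⟨p, hp⟩
  · simp [h]
  · apply Set.Finite.subset (Set.finite_Iic (2 * p))
    intro q hq
    simp only [Set.mem_Iic]
    by_cases hpq : p = q
    · omega
    · have hg := hsym p hp q hq hpq
      have hp2 : 2 ≤ p := (hprime p hp).1.two_le
      have : Nat.gcd (p - 1) (q - 1) ≤ p - 1 := Nat.gcd_le_left _ (by omega)
      omega
end
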